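/- Let a ∈ (0,1) and c > 0. Then the infimum of x + y + z over all nonnegative reals x, y, z satisfying 4a·x + 3(1−a)·(y+z) ≥ c and x ≥ y + z equals min(1/(4a), 2/(a+3)) · c. -/

import Mathlib

theorem stmt_2 (a c : ℝ) (ha : 0 < a) (ha1 : a < 1) (hc : 0 < c) :
    sInf {t : ℝ | ∃ x y z : ℝ, 0 ≤ x ∧ 0 ≤ y ∧ 0 ≤ z ∧
        4 * a * x + 3 * (1 - a) * (y + z) ≥ c ∧ x ≥ y + z ∧ t = x + y + z}
      = min (1 / (4 * a)) (2 / (a + 3)) * c := by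
  have ha3 : (0:ℝ) < a + 3 := by linarith
  have h4a : (0:ℝ) < 4 * a := by linarith
  have hlb : ∀ t ∈ {t : ℝ | ∃ x y z : ℝ, 0 ≤ x ∧ 0 ≤ y ∧ 0 ≤ z ∧
        4 * a * x + 3 * (1 - a) * (y + z) ≥ c ∧ x ≥ y + z ∧ t = x + y + z},
      min (1 / (4 * a)) (2 / (a + 3)) * c ≤ t := by
    rintro t ⟨x, y, z, hx, hy, hz, h1, h2, rfl⟩
    rcases le_total (3/7 : ℝ) a with hcase | hcase
    · rw [min_eq_left (by rw [div_le_div_iff₀ h4a ha3]; linarith),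
        div_mul_eq_mul_div, div_le_iff₀ h4a]
      nlinarith [mul_nonneg (by linarith : (0:ℝ) ≤ 7*a - 3) (by linarith : (0:ℝ) ≤ y + z)]
    · rw [min_eq_right (by rw [div_le_div_iff₀ ha3 h4a]; linarith),
        div_mul_eq_mul_div, div_le_iff₀ ha3]
      nlinarith [mul_nonneg (by linarith : (0:ℝ) ≤ 3 - 7*a) (by linarith : (0:ℝ) ≤ x - (y + z))]
  apply le_antisymm
  · apply csInf_le ⟨_, hlb⟩
    rcases le_total (3/7 : ℝ) a with hcase | hcase
    · refine ⟨c / (4 * a), 0, 0, by positivity, le_refl _, le_refl _, ?_, ?_, ?_⟩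
      · rw [ge_iff_le]; rw [mul_div_cancel₀ _ (ne_of_gt h4a)]; linarith
      · simp; positivity
      · rw [min_eq_left (by rw [div_le_div_iff₀ h4a ha3]; linarith)]
        field_simp; ring
    · refine ⟨c / (a + 3), c / (a + 3), 0, by positivity, by positivity, le_refl _, ?_, ?_, ?_⟩
      · rw [ge_iff_le]
        have : 4 * a * (c / (a + 3)) + 3 * (1 - a) * (c / (a + 3) + 0) = c := by
          field_simp; ring
        linarith [this.ge]
      · have : (0:ℝ) ≤ c / (a + 3) := by positivity
        linarith
      · rw [min_eq_right (by rw [div_le_div_iff₀ ha3 h4a]; linarith)]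
        field_simp; ring
  · exact le_csInf ⟨c / a, c / a, 0, 0, by positivity, le_refl _, le_refl _,
      by rw [ge_iff_le]; nlinarith [mul_div_cancel₀ c (ne_of_gt ha)], by norm_num; positivity, by ring⟩ hlb
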